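/- For every prime p and positive integer n, B_{n+p^2} \equiv 2*B_n + B_{n+1} (mod p). -/

import Mathlib

/-- Stirling numbers of the second kind. -/
def stirling : ℕ → ℕ → ℕ
  | 0, 0 => 1
  | 0, _ + 1 => 0
  | _ + 1, 0 => 0
  | n + 1, k + 1 => stirling n k + (k + 1) * stirling n (k + 1)

/-- The `n`-th Bell number. -/
def bell (n : ℕ) : ℕ := ∑ k ∈ Finset.range (n + 1), stirling n k
lemma stirling_zero_right (n : ℕ) : stirling (n+1) 0 = 0 := rfl

lemma stirling_of_lt : ∀ n k, n < k → stirling n k = 0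
  | 0, 0, h => absurd h (lt_irrefl 0)
  | 0, k+1, _ => rfl
  | n+1, 0, h => by omega
  | n+1, k+1, h => by
      rw [stirling, stirling_of_lt n k (by omega), stirling_of_lt n (k+1) (by omega)]; ring

lemma stirling_one (k : ℕ) : stirling 1 k = if k = 1 then 1 else 0 := by
  match k with
  | 0 => rfl
  | 1 => rfl
  | k+2 => simp [stirling, stirling_of_lt 0 (k+1) (by omega)]

lemma stirling_one_right : ∀ n, stirling (n+1) 1 = 1
  | 0 => rfl
  | n+1 => by rw [stirling, stirling_one_right n]; rfl

lemma stirling_self : ∀ n, stirling n n = 1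
  | 0 => rfl
  | n+1 => by rw [stirling, stirling_self n, stirling_of_lt n (n+1) (by omega)]; ring

def G (n k : ℕ) : ℤ := ∑ j ∈ Finset.range (k+1), (-1)^j * (k.choose j) * (j:ℤ)^n

lemma H_eq (n k : ℕ) :
    (∑ i ∈ Finset.range (k+1), (-1:ℤ)^i * (k.choose i) * ((i:ℤ)+1)^n)
      = G n k - G n (k+1) := by
  have h1 : G n (k+1) = G n k
      - ∑ i ∈ Finset.range (k+1), (-1:ℤ)^i * (k.choose i) * ((i:ℤ)+1)^n := by
    rw [G, Finset.sum_range_succ']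
    have h0 : ((-1:ℤ))^0 * ((k+1).choose 0) * ((0:ℕ):ℤ)^n = ((0:ℕ):ℤ)^n := by simp
    rw [h0]
    have hsplit : ∀ i ∈ Finset.range (k+1),
        (-1:ℤ)^(i+1) * ((k+1).choose (i+1)) * ((i+1:ℕ):ℤ)^n
          = -((-1:ℤ)^i * (k.choose i) * ((i:ℤ)+1)^n)
            + (-1:ℤ)^(i+1) * (k.choose (i+1)) * ((i:ℤ)+1)^n := by
      intro i _
      rw [Nat.choose_succ_succ]
      push_cast
      ring
    rw [Finset.sum_congr rfl hsplit, Finset.sum_add_distrib]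
    have h2 : ∑ i ∈ Finset.range (k+1), (-1:ℤ)^(i+1) * (k.choose (i+1)) * ((i:ℤ)+1)^n
        = G n k - ((0:ℕ):ℤ)^n := by
      have hL : ∑ i ∈ Finset.range (k+1), (-1:ℤ)^(i+1) * (k.choose (i+1)) * ((i:ℤ)+1)^n
          = ∑ i ∈ Finset.range k, (-1:ℤ)^(i+1) * (k.choose (i+1)) * ((i:ℤ)+1)^n := by
        rw [Finset.sum_range_succ]
        simp [Nat.choose_succ_self]
      have hR : G n k = (∑ i ∈ Finset.range k,
          (-1:ℤ)^(i+1) * (k.choose (i+1)) * (((i+1:ℕ)):ℤ)^n) + ((0:ℕ):ℤ)^n := by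
        rw [G, Finset.sum_range_succ']
        simp
      rw [hL, hR]
      push_cast
      ring
    rw [h2, Finset.sum_neg_distrib]
    ring
  rw [h1]; ring

lemma G_succ_succ (n k : ℕ) :
    G (n+1) (k+1) = ((k:ℤ)+1) * (G n (k+1) - G n k) := by
  have h1 : G (n+1) (k+1)
      = -(((k:ℤ)+1) * ∑ i ∈ Finset.range (k+1), (-1:ℤ)^i * (k.choose i) * ((i:ℤ)+1)^n) := by
    rw [G, Finset.sum_range_succ']
    have h0 : ((-1:ℤ))^0 * ((k+1).choose 0) * ((0:ℕ):ℤ)^(n+1) = 0 := by simp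
    rw [h0, add_zero]
    have hsplit : ∀ i ∈ Finset.range (k+1),
        (-1:ℤ)^(i+1) * ((k+1).choose (i+1)) * ((i+1:ℕ):ℤ)^(n+1)
          = -(((k:ℤ)+1) * ((-1:ℤ)^i * (k.choose i) * ((i:ℤ)+1)^n)) := by
      intro i _
      have hc : ((k+1).choose (i+1)) * (i+1) = (k+1) * (k.choose i) := by
        simpa using (Nat.add_one_mul_choose_eq k i).symm
      have hc' : (((k+1).choose (i+1)) : ℤ) * ((i:ℤ)+1) = ((k:ℤ)+1) * (k.choose i) := by
        exact_mod_cast congrArg (Nat.cast : ℕ → ℤ) hc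
      push_cast
      calc (-1:ℤ)^(i+1) * ((k+1).choose (i+1)) * ((i:ℤ)+1)^(n+1)
          = (-1:ℤ)^(i+1) * ((((k+1).choose (i+1)) : ℤ) * ((i:ℤ)+1)) * ((i:ℤ)+1)^n := by ring
        _ = (-1:ℤ)^(i+1) * (((k:ℤ)+1) * (k.choose i)) * ((i:ℤ)+1)^n := by rw [hc']
        _ = -(((k:ℤ)+1) * ((-1:ℤ)^i * (k.choose i) * ((i:ℤ)+1)^n)) := by ring
    rw [Finset.sum_congr rfl hsplit, Finset.sum_neg_distrib, ← Finset.mul_sum]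
  rw [h1, H_eq]
  ring

lemma key : ∀ n k : ℕ, ((k.factorial * stirling n k : ℕ) : ℤ) = (-1)^k * G n k := by
  intro n
  induction n with
  | zero =>
    intro k
    match k with
    | 0 => simp [stirling, G]
    | k+1 =>
      have : G 0 (k+1) = ∑ j ∈ Finset.range (k+2), (-1:ℤ)^j * ((k+1).choose j) := by
        rw [G]
        refine Finset.sum_congr rfl fun j hj => ?_
        rcases Nat.eq_zero_or_pos j with h | h
        · subst h; simp
        · simp [pow_zero]
      rw [this, Int.alternating_sum_range_choose]
      simp [stirling]
  | succ n ih =>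
    intro k
    match k with
    | 0 =>
      have : G (n+1) 0 = 0 := by simp [G]
      simp [stirling, this]
    | k+1 =>
      have hst : stirling (n+1) (k+1) = stirling n k + (k+1) * stirling n (k+1) := rfl
      have hf : (k+1).factorial = (k+1) * k.factorial := rfl
      rw [hst, G_succ_succ]
      have e1 := ih k
      have e2 := ih (k+1)
      push_cast [hf] at *
      have : ((k:ℤ)+1) * ((k.factorial : ℤ) * (stirling n k : ℤ))
           + ((k:ℤ)+1) * (((k:ℤ)+1) * (k.factorial : ℤ) * (stirling n (k+1) : ℤ))
           = (-1)^(k+1) * (((k:ℤ)+1) * (G n (k+1) - G n k)) := by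
        rw [e1, e2]
        ring
      linear_combination this

lemma stirling_p (p : ℕ) (hp : p.Prime) (k : ℕ) :
    (stirling p k : ZMod p) = (if k = 1 then (1 : ZMod p) else 0)
      + (if k = p then (1 : ZMod p) else 0) := by
  haveI : Fact p.Prime := ⟨hp⟩
  have hp2 := hp.two_le
  obtain ⟨m, hm⟩ : ∃ m, p = m + 1 := ⟨p - 1, by omega⟩
  rcases eq_or_ne k 1 with hk1 | hk1
  · subst hk1
    have h1 : stirling p 1 = 1 := by rw [hm]; exact stirling_one_right m
    rw [h1]
    simp [show (1:ℕ) ≠ p by omega]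
  rcases eq_or_ne k p with hkp | hkp
  · subst hkp
    rw [stirling_self]
    simp [hk1]
  rcases lt_or_ge p k with hlt | hle
  · rw [stirling_of_lt p k hlt]
    simp [hk1, hkp]
  -- now k < p, k ≠ 1
  have hklt : k < p := lt_of_le_of_ne hle hkp
  rcases Nat.eq_zero_or_pos k with hk0 | hkpos
  · subst hk0
    have h0 : stirling p 0 = 0 := by rw [hm]; rfl
    rw [h0]
    simp [show (0:ℕ) ≠ p by omega]
  -- 2 ≤ k < p
  have hG1 : G 1 k = 0 := by
    have h := key 1 k
    rw [stirling_one, if_neg hk1] at h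
    simp only [Nat.mul_zero, Nat.cast_zero] at h
    have := h.symm
    rcases mul_eq_zero.mp this with h' | h'
    · exact absurd h' (pow_ne_zero _ (by norm_num))
    · exact h'
  have hGp : ((G p k : ℤ) : ZMod p) = 0 := by
    have : ((G p k : ℤ) : ZMod p) = ((G 1 k : ℤ) : ZMod p) := by
      simp only [G]
      push_cast
      refine Finset.sum_congr rfl fun j hj => ?_
      rw [ZMod.pow_card]
      ring
    rw [this, hG1, Int.cast_zero]
  have hmain : ((k.factorial : ZMod p)) * ((stirling p k : ℕ) : ZMod p) = 0 := by
    have h := congrArg (fun z : ℤ => (z : ZMod p)) (key p k)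
    push_cast at h
    rw [hGp, mul_zero] at h
    exact h
  have hfac : (k.factorial : ZMod p) ≠ 0 := by
    rw [Ne, ZMod.natCast_eq_zero_iff]
    rw [hp.dvd_factorial]
    omega
  rcases mul_eq_zero.mp hmain with h' | h'
  · exact absurd h' hfac
  · rw [h']
    simp [hk1, hkp]

lemma stirling_zero_left (j : ℕ) : stirling 0 j = if j = 0 then 1 else 0 := by
  match j with
  | 0 => rfl
  | j+1 => rfl

lemma stirling_add_p (p : ℕ) (hp : p.Prime) :
    ∀ n k, ((stirling (n + p) k : ℕ) : ZMod p)
      = ((stirling (n+1) k : ℕ) : ZMod p)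
        + (if p ≤ k then ((stirling n (k-p) : ℕ) : ZMod p) else 0) := by
  intro n
  induction n with
  | zero =>
    intro k
    have h1 : ((stirling 1 k : ℕ) : ZMod p) = if k = 1 then 1 else 0 := by
      rw [stirling_one]; split <;> simp
    have h2 : (if p ≤ k then ((stirling 0 (k-p) : ℕ) : ZMod p) else 0)
        = if k = p then 1 else 0 := by
      rcases eq_or_ne k p with rfl | h
      · rw [if_pos le_rfl, if_pos rfl, Nat.sub_self]
        norm_num [stirling_zero_left]
      · rw [if_neg h]
        split
        · rw [stirling_zero_left, if_neg (by omega)]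
          simp
        · rfl
    rw [zero_add, stirling_p p hp k, h1, h2]
  | succ n ih =>
    intro k
    match k with
    | 0 =>
      have e : n + 1 + p = (n + p) + 1 := by omega
      rw [e]
      rw [show stirling ((n+p)+1) 0 = 0 from rfl, show stirling (n+1+1) 0 = 0 from rfl]
      rw [if_neg (show ¬ p ≤ 0 by have := hp.pos; omega)]
      simp
    | k+1 =>
      have e : n + 1 + p = (n + p) + 1 := by omega
      rw [e]
      have hrec : stirling ((n+p)+1) (k+1) = stirling (n+p) k + (k+1) * stirling (n+p) (k+1) := rfl
      have hrec2 : stirling (n+1+1) (k+1) = stirling (n+1) k + (k+1) * stirling (n+1) (k+1) := rfl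
      rw [hrec, hrec2]
      push_cast
      rw [ih k, ih (k+1)]
      rcases le_or_gt p k with hpk | hpk
      · rw [if_pos hpk, if_pos (by omega : p ≤ k + 1), if_pos (by omega : p ≤ k + 1)]
        have e2 : k + 1 - p = (k - p) + 1 := by omega
        rw [e2]
        have hrec3 : stirling (n+1) ((k-p)+1) = stirling n (k-p) + ((k-p)+1) * stirling n ((k-p)+1) := rfl
        rw [hrec3]
        push_cast
        have hc : (((k - p : ℕ) : ZMod p)) = (k : ZMod p) := by
          rw [Nat.cast_sub hpk, ZMod.natCast_self, sub_zero]
        rw [hc]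
        ring
      · rcases eq_or_ne p (k+1) with rfl | hne
        · rw [if_neg (by omega), if_pos le_rfl, if_pos le_rfl, Nat.sub_self]
          rw [show stirling (n+1) 0 = 0 from rfl]
          push_cast
          rw [show ((k:ZMod (k+1)) + 1) = ((k+1 : ℕ) : ZMod (k+1)) by push_cast; ring,
            ZMod.natCast_self]
          ring
        · rw [if_neg (by omega), if_neg (by omega), if_neg (by omega)]
          ring

lemma touchard (p : ℕ) (hp : p.Prime) (n : ℕ) :
    ((bell (n + p) : ℕ) : ZMod p) = ((bell (n+1) : ℕ) : ZMod p) + ((bell n : ℕ) : ZMod p) := by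
  have hcast : ∀ m : ℕ, ((bell m : ℕ) : ZMod p)
      = ∑ k ∈ Finset.range (m+1), ((stirling m k : ℕ) : ZMod p) := by
    intro m; rw [bell]; push_cast; rfl
  rw [hcast, hcast, hcast]
  calc ∑ k ∈ Finset.range (n+p+1), ((stirling (n+p) k : ℕ) : ZMod p)
      = ∑ k ∈ Finset.range (n+p+1), (((stirling (n+1) k : ℕ) : ZMod p)
          + (if p ≤ k then ((stirling n (k-p) : ℕ) : ZMod p) else 0)) :=
        Finset.sum_congr rfl fun k _ => stirling_add_p p hp n k
    _ = (∑ k ∈ Finset.range (n+p+1), ((stirling (n+1) k : ℕ) : ZMod p))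
          + ∑ k ∈ Finset.range (n+p+1), (if p ≤ k then ((stirling n (k-p) : ℕ) : ZMod p) else 0) :=
        Finset.sum_add_distrib
    _ = (∑ k ∈ Finset.range (n+2), ((stirling (n+1) k : ℕ) : ZMod p))
          + ∑ k ∈ Finset.range (n+1), ((stirling n k : ℕ) : ZMod p) := by
        congr 1
        · symm
          apply Finset.sum_subset
          · apply Finset.range_subset_range.mpr
            have := hp.two_le
            omega
          · intro k _ hk
            rw [stirling_of_lt (n+1) k (by simp at hk ⊢; omega)]
            simp
        · rw [Finset.range_eq_Ico,
            ← Finset.sum_Ico_consecutive _ (Nat.zero_le p) (by omega : p ≤ n+p+1)]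
          have hz : ∑ k ∈ Finset.Ico 0 p, (if p ≤ k then ((stirling n (k-p) : ℕ) : ZMod p) else 0) = 0 := by
            apply Finset.sum_eq_zero
            intro k hk
            simp only [Finset.mem_Ico] at hk
            rw [if_neg (by omega)]
          rw [hz, zero_add, Finset.sum_Ico_eq_sum_range]
          have : n + p + 1 - p = n + 1 := by omega
          rw [this, Finset.range_eq_Ico]
          apply Finset.sum_congr rfl
          intro k _
          rw [if_pos (by omega), show p + k - p = k by omega]

lemma pascal_sum {M : Type*} [CommRing M] (k : ℕ) (f : ℕ → M) :
    ∑ j ∈ Finset.range (k+2), (((k+1).choose j : ℕ) : M) * f j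
      = (∑ j ∈ Finset.range (k+1), ((k.choose j : ℕ) : M) * f (j+1))
        + ∑ j ∈ Finset.range (k+1), ((k.choose j : ℕ) : M) * f j := by
  rw [Finset.sum_range_succ']
  have split : ∀ i ∈ Finset.range (k+1),
      (((k+1).choose (i+1) : ℕ) : M) * f (i+1)
        = ((k.choose i : ℕ) : M) * f (i+1) + ((k.choose (i+1) : ℕ) : M) * f (i+1) := by
    intro i _
    rw [Nat.choose_succ_succ]
    push_cast
    ring
  rw [Finset.sum_congr rfl split, Finset.sum_add_distrib, add_assoc]
  congr 1
  rw [Finset.sum_range_succ, Nat.choose_succ_self,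
    Finset.sum_range_succ' (fun j => ((k.choose j : ℕ) : M) * f j) k]
  simp

lemma iter (p : ℕ) (hp : p.Prime) :
    ∀ k n, ((bell (n + k*p) : ℕ) : ZMod p)
      = ∑ j ∈ Finset.range (k+1), ((k.choose j : ℕ) : ZMod p) * ((bell (n+j) : ℕ) : ZMod p) := by
  intro k
  induction k with
  | zero => intro n; simp
  | succ k ih =>
    intro n
    have e : n + (k+1)*p = (n+p) + k*p := by ring
    rw [e, ih (n+p)]
    have step : ∀ j ∈ Finset.range (k+1),
        ((k.choose j : ℕ) : ZMod p) * ((bell (n+p+j) : ℕ) : ZMod p)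
          = ((k.choose j : ℕ) : ZMod p) * ((bell (n+(j+1)) : ℕ) : ZMod p)
            + ((k.choose j : ℕ) : ZMod p) * ((bell (n+j) : ℕ) : ZMod p) := by
      intro j _
      have e2 : n + p + j = (n+j) + p := by ring
      rw [e2, touchard p hp (n+j), show n + j + 1 = n + (j+1) by ring]
      ring
    rw [Finset.sum_congr rfl step, Finset.sum_add_distrib,
      pascal_sum k (fun j => ((bell (n+j) : ℕ) : ZMod p))]

theorem touchard_sq (p n : ℕ) (hp : p.Prime) (hn : 0 < n) :
    bell (n + p ^ 2) ≡ 2 * bell n + bell (n + 1) [MOD p] := by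
  apply (ZMod.natCast_eq_natCast_iff _ _ _).mp
  have e : n + p^2 = n + p*p := by ring
  rw [e, iter p hp p n]
  obtain ⟨q, hq⟩ : ∃ q, p = q + 1 := ⟨p - 1, by have := hp.pos; omega⟩
  have hsum : ∑ j ∈ Finset.range (p+1), ((p.choose j : ℕ) : ZMod p) * ((bell (n+j) : ℕ) : ZMod p)
      = ((bell n : ℕ) : ZMod p) + ((bell (n+p) : ℕ) : ZMod p) := by
    rw [Finset.sum_range_succ, Nat.choose_self]
    have e2 : p = q + 1 := hq
    rw [show Finset.range p = Finset.range (q+1) by rw [hq],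
      Finset.sum_range_succ' (fun j => ((p.choose j : ℕ) : ZMod p) * ((bell (n+j) : ℕ) : ZMod p)) q]
    have hmid : ∑ i ∈ Finset.range q,
        ((p.choose (i+1) : ℕ) : ZMod p) * ((bell (n+(i+1)) : ℕ) : ZMod p) = 0 := by
      apply Finset.sum_eq_zero
      intro i hi
      simp only [Finset.mem_range] at hi
      have hdvd : p ∣ p.choose (i+1) := hp.dvd_choose_self (by omega) (by omega)
      rw [(ZMod.natCast_eq_zero_iff _ _).mpr hdvd, zero_mul]
    rw [hmid]
    simp
  rw [hsum, touchard p hp n]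
  push_cast
  ring
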